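/- Let G be a finite simple graph and v a vertex of G. Then d_c(G − v) = d_c(G) − 1 if and only if v ∈ ker(G). -/

import Mathlib

open Finset

namespace CritGraph

variable {V : Type*} [Fintype V] [DecidableEq V]

/-- The neighborhood of a set of vertices `X`:
all vertices having at least one neighbor in `X`. -/
def nbhd (G : SimpleGraph V) [DecidableRel G.Adj] (X : Finset V) : Finset V :=
  univ.filter fun v => ∃ x ∈ X, G.Adj v x

/-- The difference `d(X) = |X| - |N(X)|` of a set of vertices `X`. -/
def diff (G : SimpleGraph V) [DecidableRel G.Adj] (X : Finset V) : ℤ :=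
  (X.card : ℤ) - ((nbhd G X).card : ℤ)

/-- A set of vertices is independent if no two of its vertices are adjacent. -/
def IsIndep (G : SimpleGraph V) (S : Finset V) : Prop :=
  ∀ u ∈ S, ∀ v ∈ S, ¬ G.Adj u v

instance (G : SimpleGraph V) [DecidableRel G.Adj] : DecidablePred (IsIndep G) := fun S =>
  inferInstanceAs (Decidable (∀ u ∈ S, ∀ v ∈ S, ¬ G.Adj u v))

/-- The critical difference `d_c(G) = max {d(X) : X ⊆ V}`. -/
def dC (G : SimpleGraph V) [DecidableRel G.Adj] : ℤ :=
  (univ : Finset V).powerset.sup' (Finset.powerset_nonempty _) (diff G)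

/-- The critical independence difference `id_c(G) = max {d(I) : I independent}`. -/
def idC (G : SimpleGraph V) [DecidableRel G.Adj] : ℤ :=
  ((univ : Finset V).powerset.filter (IsIndep G)).sup'
    ⟨∅, by simp [IsIndep]⟩ (diff G)

/-- `A` is a critical independent set: `A` is independent and
`d(A) = max {d(I) : I independent}`. -/
def IsCritIndep (G : SimpleGraph V) [DecidableRel G.Adj] (A : Finset V) : Prop :=
  IsIndep G A ∧ ∀ I : Finset V, IsIndep G I → diff G I ≤ diff G A

instance (G : SimpleGraph V) [DecidableRel G.Adj] : DecidablePred (IsCritIndep G) := fun A =>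
  inferInstanceAs (Decidable (IsIndep G A ∧ ∀ I : Finset V, IsIndep G I → diff G I ≤ diff G A))

/-- `ker(G)`: the intersection of all critical independent sets of `G`. -/
def kerG (G : SimpleGraph V) [DecidableRel G.Adj] : Finset V :=
  univ.filter fun v => ∀ A : Finset V, IsCritIndep G A → v ∈ A

/-- `G - v`: the induced subgraph of `G` on `V \ {v}`. -/
def deleteVert (G : SimpleGraph V) (v : V) : SimpleGraph {u : V // u ≠ v} :=
  G.comap Subtype.val

instance (G : SimpleGraph V) (v : V) [DecidableRel G.Adj] :
    DecidableRel (deleteVert G v).Adj := fun a b =>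
  inferInstanceAs (Decidable (G.Adj a.val b.val))

/-- `S` is an inclusion-minimal independent set with positive difference. -/
def MinPosIndep (G : SimpleGraph V) [DecidableRel G.Adj] (S : Finset V) : Prop :=
  IsIndep G S ∧ 0 < diff G S ∧ ∀ S' ⊂ S, ¬ (IsIndep G S' ∧ 0 < diff G S')

/-- `S` is a maximum independent set. -/
def IsMaxIndep (G : SimpleGraph V) (S : Finset V) : Prop :=
  IsIndep G S ∧ ∀ I : Finset V, IsIndep G I → I.card ≤ S.card

instance (G : SimpleGraph V) [DecidableRel G.Adj] : DecidablePred (IsMaxIndep G) := fun S =>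
  inferInstanceAs (Decidable (IsIndep G S ∧ ∀ I : Finset V, IsIndep G I → I.card ≤ S.card))

/-- `core(G)`: the intersection of all maximum independent sets of `G`. -/
def coreG (G : SimpleGraph V) [DecidableRel G.Adj] : Finset V :=
  univ.filter fun v => ∀ A : Finset V, IsMaxIndep G A → v ∈ A


section Aux

variable (G : SimpleGraph V) [DecidableRel G.Adj]

lemma mem_nbhd {X : Finset V} {u : V} : u ∈ nbhd G X ↔ ∃ x ∈ X, G.Adj u x := by
  simp [nbhd]

lemma nbhd_mono {X Y : Finset V} (h : X ⊆ Y) : nbhd G X ⊆ nbhd G Y := by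
  intro u hu
  obtain ⟨x, hx, ha⟩ := (mem_nbhd G).1 hu
  exact (mem_nbhd G).2 ⟨x, h hx, ha⟩

lemma diff_le_dC (X : Finset V) : diff G X ≤ dC G :=
  Finset.le_sup' _ (by simp)

lemma exists_dC : ∃ X : Finset V, diff G X = dC G := by
  obtain ⟨X, -, hX⟩ :=
    Finset.exists_mem_eq_sup' (Finset.powerset_nonempty (univ : Finset V)) (diff G)
  exact ⟨X, hX.symm⟩

lemma zhang_indep (X : Finset V) : IsIndep G (X \ nbhd G X) := by
  intro u hu w hw hadj
  exact (mem_sdiff.1 hu).2 ((mem_nbhd G).2 ⟨w, (mem_sdiff.1 hw).1, hadj⟩)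

lemma zhang_diff (X : Finset V) : diff G X ≤ diff G (X \ nbhd G X) := by
  set N := nbhd G X with hN
  set A := X \ N with hA
  set B := X ∩ N with hB
  have hABcard : A.card + B.card = X.card := by
    rw [hA, hB]; exact Finset.card_sdiff_add_card_inter X N
  have hsub : nbhd G A ∪ B ⊆ N := by
    intro u hu
    rcases mem_union.1 hu with h | h
    · exact nbhd_mono G (hA ▸ sdiff_subset) h
    · exact (mem_inter.1 h).2
  have hdisj : Disjoint (nbhd G A) B := by
    rw [Finset.disjoint_left]
    intro b hb hbB
    obtain ⟨a, haA, hadj⟩ := (mem_nbhd G).1 hb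
    have haN : a ∈ N := (mem_nbhd G).2 ⟨b, (mem_inter.1 hbB).1, hadj.symm⟩
    exact (mem_sdiff.1 haA).2 haN
  have hcard : (nbhd G A).card + B.card ≤ N.card := by
    rw [← Finset.card_union_of_disjoint hdisj]
    exact Finset.card_le_card hsub
  simp only [diff, ← hN, ← hA]
  omega

lemma diff_supermod (X Y : Finset V) :
    diff G X + diff G Y ≤ diff G (X ∪ Y) + diff G (X ∩ Y) := by
  have h1 : (X ∪ Y).card + (X ∩ Y).card = X.card + Y.card :=
    Finset.card_union_add_card_inter X Y
  have h2 : nbhd G (X ∪ Y) = nbhd G X ∪ nbhd G Y := by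
    ext u
    simp only [mem_nbhd, mem_union]
    constructor
    · rintro ⟨x, hx | hx, ha⟩
      · exact Or.inl ⟨x, hx, ha⟩
      · exact Or.inr ⟨x, hx, ha⟩
    · rintro (⟨x, hx, ha⟩ | ⟨x, hx, ha⟩)
      · exact ⟨x, Or.inl hx, ha⟩
      · exact ⟨x, Or.inr hx, ha⟩
  have h3 : nbhd G (X ∩ Y) ⊆ nbhd G X ∩ nbhd G Y := fun u hu =>
    mem_inter.2 ⟨nbhd_mono G inter_subset_left hu, nbhd_mono G inter_subset_right hu⟩
  have h4 : (nbhd G X ∪ nbhd G Y).card + (nbhd G X ∩ nbhd G Y).card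
      = (nbhd G X).card + (nbhd G Y).card := Finset.card_union_add_card_inter _ _
  have h5 := Finset.card_le_card h3
  simp only [diff, h2]
  omega

lemma exists_critIndep : ∃ A : Finset V, IsCritIndep G A ∧ diff G A = dC G := by
  obtain ⟨X, hX⟩ := exists_dC G
  have h1 : diff G (X \ nbhd G X) = dC G :=
    le_antisymm (diff_le_dC G _) (hX ▸ zhang_diff G X)
  exact ⟨X \ nbhd G X, ⟨zhang_indep G X,
    fun I _ => (diff_le_dC G I).trans h1.symm.le⟩, h1⟩

lemma critIndep_of_diff_eq {A : Finset V} (hA : IsIndep G A) (h : diff G A = dC G) :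
    IsCritIndep G A :=
  ⟨hA, fun I _ => (diff_le_dC G I).trans h.symm.le⟩

lemma IsCritIndep.diff_eq {A : Finset V} (hA : IsCritIndep G A) : diff G A = dC G := by
  obtain ⟨A₀, hA₀, h₀⟩ := exists_critIndep G
  exact le_antisymm (diff_le_dC G A) (h₀ ▸ hA.2 A₀ hA₀.1)

lemma mem_kerG {v : V} : v ∈ kerG G ↔ ∀ A : Finset V, IsCritIndep G A → v ∈ A := by
  simp [kerG]

variable (v : V)

lemma image_subtype_of_not_mem {X : Finset V} (hv : v ∉ X) :
    (X.subtype (fun u => u ≠ v)).image Subtype.val = X := by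
  ext u
  simp only [mem_image, Finset.mem_subtype]
  constructor
  · rintro ⟨w, hw, rfl⟩; exact hw
  · intro hu
    exact ⟨⟨u, fun h => hv (h ▸ hu)⟩, hu, rfl⟩

lemma nbhd_deleteVert (S : Finset {u : V // u ≠ v}) :
    (nbhd (deleteVert G v) S).image Subtype.val
      = (nbhd G (S.image Subtype.val)).erase v := by
  ext u
  constructor
  · rintro hu
    obtain ⟨w, hw, rfl⟩ := mem_image.1 hu
    obtain ⟨x, hx, hadj⟩ := (mem_nbhd _).1 hw
    exact mem_erase.2 ⟨w.2, (mem_nbhd G).2 ⟨x.val, mem_image_of_mem _ hx, hadj⟩⟩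
  · intro hu
    obtain ⟨hne, hNn⟩ := mem_erase.1 hu
    obtain ⟨y, hy, hadj⟩ := (mem_nbhd G).1 hNn
    obtain ⟨x, hx, rfl⟩ := mem_image.1 hy
    exact mem_image.2 ⟨⟨u, hne⟩, (mem_nbhd _).2 ⟨x, hx, hadj⟩, rfl⟩

lemma diff_deleteVert (S : Finset {u : V // u ≠ v}) :
    diff (deleteVert G v) S =
      diff G (S.image Subtype.val)
        + (if v ∈ nbhd G (S.image Subtype.val) then 1 else 0) := by
  have hs : (S.image Subtype.val).card = S.card :=
    card_image_of_injective _ Subtype.val_injective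
  have hn : ((nbhd (deleteVert G v) S).image Subtype.val).card
      = (nbhd (deleteVert G v) S).card :=
    card_image_of_injective _ Subtype.val_injective
  rw [nbhd_deleteVert] at hn
  by_cases hv : v ∈ nbhd G (S.image Subtype.val)
  · rw [card_erase_of_mem hv] at hn
    have hpos : 0 < (nbhd G (S.image Subtype.val)).card := card_pos.2 ⟨v, hv⟩
    simp only [diff, if_pos hv]
    omega
  · rw [erase_eq_of_notMem hv] at hn
    simp only [diff, if_neg hv]
    omega

lemma dC_deleteVert_ge : dC G - 1 ≤ dC (deleteVert G v) := by
  obtain ⟨X, hX⟩ := exists_dC G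
  set X₀ := X.erase v with hX₀
  set S := X₀.subtype (fun u => u ≠ v) with hS
  have himg : S.image Subtype.val = X₀ :=
    image_subtype_of_not_mem v (notMem_erase v X)
  have hcard : X.card ≤ X₀.card + 1 := by
    by_cases hvX : v ∈ X
    · rw [hX₀, Finset.card_erase_of_mem hvX]; omega
    · rw [hX₀, Finset.erase_eq_of_notMem hvX]; omega
  have hnb : nbhd G X₀ ⊆ nbhd G X := nbhd_mono G (erase_subset v X)
  have hnbc := Finset.card_le_card hnb
  have h1 : diff G X - 1 ≤ diff G X₀ := by
    simp only [diff]; omega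
  have h2 := diff_deleteVert G v S
  rw [himg] at h2
  have h3 : diff G X₀ ≤ diff (deleteVert G v) S := by
    rw [h2]; split <;> omega
  calc dC G - 1 = diff G X - 1 := by rw [hX]
    _ ≤ diff (deleteVert G v) S := le_trans h1 h3
    _ ≤ dC (deleteVert G v) := diff_le_dC _ S

end Aux

/-- `d_c(G - v) = d_c(G) - 1` if and only if `v ∈ ker(G)`. -/
theorem dC_deleteVert_eq_sub_one_iff_mem_kerG (G : SimpleGraph V) [DecidableRel G.Adj]
    (v : V) : dC (deleteVert G v) = dC G - 1 ↔ v ∈ kerG G := by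
  constructor
  · intro h
    rw [mem_kerG]
    intro A hA
    by_contra hvA
    set S := A.subtype (fun u => u ≠ v) with hS
    have himg : S.image Subtype.val = A := image_subtype_of_not_mem v hvA
    have h2 := diff_deleteVert G v S
    rw [himg, hA.diff_eq] at h2
    have h3 : dC G ≤ diff (deleteVert G v) S := by rw [h2]; split <;> omega
    have h4 : diff (deleteVert G v) S ≤ dC G - 1 := h ▸ diff_le_dC _ S
    omega
  · intro hv
    have hker : ∀ A : Finset V, IsCritIndep G A → v ∈ A := (mem_kerG G).1 hv
    refine le_antisymm ?_ (dC_deleteVert_ge G v)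
    refine Finset.sup'_le _ _ (fun S _ => ?_)
    by_contra hcon
    push_neg at hcon
    set T := S.image (Subtype.val) with hT
    have hvT : v ∉ T := by
      simp only [hT, mem_image]
      rintro ⟨a, -, h⟩
      exact a.2 h
    have hdel := diff_deleteVert G v S
    rw [← hT] at hdel
    have hTle := diff_le_dC G T
    by_cases hT1 : dC G ≤ diff G T
    · have hTd : diff G T = dC G := le_antisymm hTle hT1
      have hYd : diff G (T \ nbhd G T) = dC G :=
        le_antisymm (diff_le_dC G _) (hTd ▸ zhang_diff G T)
      have hvY := hker _ (critIndep_of_diff_eq G (zhang_indep G T) hYd)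
      exact hvT (mem_sdiff.1 hvY).1
    · push_neg at hT1
      have hvN : v ∈ nbhd G T := by
        by_contra hnv
        rw [if_neg hnv] at hdel
        omega
      rw [if_pos hvN] at hdel
      have hTd : diff G T = dC G - 1 := by omega
      obtain ⟨K, hK, hKd⟩ := exists_critIndep G
      have hvK : v ∈ K := hker K hK
      have hTK : diff G (T ∩ K) ≤ dC G - 1 := by
        by_contra hc
        push_neg at hc
        have heq : diff G (T ∩ K) = dC G :=
          le_antisymm (diff_le_dC G _) (by omega)
        have hind : IsIndep G (T ∩ K) := fun a ha b hb =>
          hK.1 a (mem_inter.1 ha).2 b (mem_inter.1 hb).2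
        have := hker _ (critIndep_of_diff_eq G hind heq)
        exact hvT (mem_inter.1 this).1
      have hsup := diff_supermod G T K
      have hUle := diff_le_dC G (T ∪ K)
      have hU : diff G (T ∪ K) = dC G := by omega
      have hYd : diff G ((T ∪ K) \ nbhd G (T ∪ K)) = dC G :=
        le_antisymm (diff_le_dC G _) (hU ▸ zhang_diff G (T ∪ K))
      have hvY := hker _ (critIndep_of_diff_eq G (zhang_indep G (T ∪ K)) hYd)
      have hvNU : v ∈ nbhd G (T ∪ K) := nbhd_mono G subset_union_left hvN
      exact (mem_sdiff.1 hvY).2 hvNU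

end CritGraph
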